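/- arXiv:1304.0499 — 3 statements merged into one kernel-verified Lean document; each statement's English description precedes it below -/
import Mathlib

section
/- The unique minimizer U(γ) of F_γ depends continuously on γ ∈ [0,∞); i.e., the solution path γ ↦ U(γ) is a continuous function. -/
open Finset

set_option maxHeartbeats 1000000 in
/-- the unique minimizer U(γ) of F_γ depends continuously on γ ∈ [0,∞). -/
theorem stmt_1 {n p : ℕ} (x : Fin n → EuclideanSpace ℝ (Fin p))
    (w : Fin n → Fin n → ℝ) (hw : ∀ i j, 0 ≤ w i j)
    (N : EuclideanSpace ℝ (Fin p) → ℝ)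
    (hN1 : ∀ v, N v = 0 ↔ v = 0)
    (hN2 : ∀ (a : ℝ) v, N (a • v) = |a| * N v)
    (hN3 : ∀ u v, N (u + v) ≤ N u + N v)
    (F : ℝ → (Fin n → EuclideanSpace ℝ (Fin p)) → ℝ)
    (hF : ∀ γ U, F γ U = (1/2) * ∑ i, ‖x i - U i‖^2 +
      γ * ∑ q ∈ Finset.univ.filter (fun q : Fin n × Fin n => q.1 < q.2),
        w q.1 q.2 * N (U q.1 - U q.2))
    (Usol : ℝ → (Fin n → EuclideanSpace ℝ (Fin p)))
    (hUsol : ∀ γ ∈ Set.Ici (0 : ℝ), ∀ V, F γ (Usol γ) ≤ F γ V) :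
    ContinuousOn Usol (Set.Ici (0 : ℝ)) := by
  classical
  have hN0 : N 0 = 0 := (hN1 0).mpr rfl
  have hNhalf : ∀ v, N ((1/2 : ℝ) • v) = (1/2) * N v := by
    intro v
    rw [hN2]
    norm_num
  have hNnn : ∀ v, 0 ≤ N v := by
    intro v
    have h2 : N (-v) = N v := by
      have := hN2 (-1) v; simpa using this
    have h := hN3 v (-v)
    rw [h2] at h
    simp [hN0] at h
    linarith
  -- abbreviations
  set f : (Fin n → EuclideanSpace ℝ (Fin p)) → ℝ :=
    fun U => (1/2) * ∑ i, ‖x i - U i‖^2 with hf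
  set g : (Fin n → EuclideanSpace ℝ (Fin p)) → ℝ :=
    fun U => ∑ q ∈ Finset.univ.filter (fun q : Fin n × Fin n => q.1 < q.2),
      w q.1 q.2 * N (U q.1 - U q.2) with hg
  have hF' : ∀ γ U, F γ U = f U + γ * g U := hF
  set D : (Fin n → EuclideanSpace ℝ (Fin p)) → (Fin n → EuclideanSpace ℝ (Fin p)) → ℝ :=
    fun U V => ∑ i, ‖U i - V i‖^2 with hDdef
  have hfnn : ∀ U, 0 ≤ f U := by
    intro U
    have : (0:ℝ) ≤ ∑ i, ‖x i - U i‖^2 := Finset.sum_nonneg (fun i _ => sq_nonneg _)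
    simp only [hf]
    linarith
  have hfx : f x = 0 := by simp [hf]
  have hgnn : ∀ U, 0 ≤ g U :=
    fun U => Finset.sum_nonneg (fun q _ => mul_nonneg (hw _ _) (hNnn _))
  have hDnn : ∀ U V, 0 ≤ D U V :=
    fun U V => Finset.sum_nonneg (fun i _ => sq_nonneg _)
  -- pointwise parallelogram identity
  have hkey : ∀ (a b c : EuclideanSpace ℝ (Fin p)),
      ‖c - (1/2:ℝ) • (a+b)‖^2 = (1/2)*‖c-a‖^2 + (1/2)*‖c-b‖^2 - (1/4)*‖a-b‖^2 := by
    intro a b c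
    have h1 : c - (1/2:ℝ) • (a+b) = (1/2:ℝ) • ((c-a)+(c-b)) := by module
    have h2 : (c-a)-(c-b) = -(a-b) := by abel
    have hp := parallelogram_law_with_norm ℝ (c-a) (c-b)
    rw [h2, norm_neg] at hp
    rw [h1, norm_smul, Real.norm_eq_abs]
    have h14 : |(1/2 : ℝ)| = 1/2 := by norm_num
    rw [h14]
    nlinarith [hp]
  -- strong minimality
  have hstrong : ∀ γ ∈ Set.Ici (0:ℝ), ∀ V,
      f (Usol γ) + γ * g (Usol γ) + (1/4) * D (Usol γ) V ≤ f V + γ * g V := by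
    intro γ hγ V
    have hγ0 : (0:ℝ) ≤ γ := hγ
    set U := Usol γ with hU
    set M : Fin n → EuclideanSpace ℝ (Fin p) := fun i => (1/2:ℝ) • (U i + V i) with hM
    have hfM : f M = (1/2) * f U + (1/2) * f V - (1/8) * D U V := by
      simp only [hf, hDdef]
      rw [show (∑ i, ‖x i - M i‖^2)
          = ∑ i, ((1/2)*‖x i - U i‖^2 + (1/2)*‖x i - V i‖^2 - (1/4)*‖U i - V i‖^2) from
        Finset.sum_congr rfl (fun i _ => hkey (U i) (V i) (x i))]
      rw [Finset.sum_sub_distrib, Finset.sum_add_distrib, ← Finset.mul_sum, ← Finset.mul_sum,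
        ← Finset.mul_sum]
      ring
    have hgM : g M ≤ (1/2) * g U + (1/2) * g V := by
      simp only [hg]
      have hterm : ∀ q ∈ Finset.univ.filter (fun q : Fin n × Fin n => q.1 < q.2),
          w q.1 q.2 * N (M q.1 - M q.2)
            ≤ (1/2) * (w q.1 q.2 * N (U q.1 - U q.2))
              + (1/2) * (w q.1 q.2 * N (V q.1 - V q.2)) := by
        intro q _
        have hMd : M q.1 - M q.2 = (1/2:ℝ) • ((U q.1 - U q.2) + (V q.1 - V q.2)) := by
          simp only [hM]
          module
        rw [hMd, hNhalf]
        have h3 := hN3 (U q.1 - U q.2) (V q.1 - V q.2)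
        have := mul_le_mul_of_nonneg_left h3 (hw q.1 q.2)
        nlinarith [this]
      calc (∑ q ∈ Finset.univ.filter (fun q : Fin n × Fin n => q.1 < q.2),
              w q.1 q.2 * N (M q.1 - M q.2))
          ≤ ∑ q ∈ Finset.univ.filter (fun q : Fin n × Fin n => q.1 < q.2),
              ((1/2) * (w q.1 q.2 * N (U q.1 - U q.2))
                + (1/2) * (w q.1 q.2 * N (V q.1 - V q.2))) := Finset.sum_le_sum hterm
        _ = (1/2) * (∑ q ∈ Finset.univ.filter (fun q : Fin n × Fin n => q.1 < q.2),
              w q.1 q.2 * N (U q.1 - U q.2))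
            + (1/2) * (∑ q ∈ Finset.univ.filter (fun q : Fin n × Fin n => q.1 < q.2),
              w q.1 q.2 * N (V q.1 - V q.2)) := by
            rw [Finset.sum_add_distrib, ← Finset.mul_sum, ← Finset.mul_sum]
    have hmin := hUsol γ hγ M
    rw [hF' γ U, hF' γ M] at hmin
    have hγg := mul_le_mul_of_nonneg_left hgM hγ0
    nlinarith [hmin, hfM, hγg]
  -- g at the minimizer is bounded by g x
  have hgx : ∀ γ ∈ Set.Ici (0:ℝ), g (Usol γ) ≤ g x := by
    intro γ hγ
    have hγ0 : (0:ℝ) ≤ γ := hγ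
    have hmin := hUsol γ hγ x
    rw [hF' γ (Usol γ), hF' γ x, hfx] at hmin
    rcases eq_or_lt_of_le hγ0 with h0 | hpos
    · -- γ = 0 : minimizer is x itself
      have hγeq : γ = 0 := h0.symm
      subst hγeq
      have hfle : f (Usol 0) ≤ 0 := by linarith
      have hsum : ∑ i, ‖x i - Usol 0 i‖^2 ≤ 0 := by
        simp only [hf] at hfle; linarith
      have hUeq : Usol 0 = x := by
        funext i
        have hle := Finset.single_le_sum
          (f := fun j => ‖x j - Usol 0 j‖^2) (fun j _ => sq_nonneg _) (Finset.mem_univ i)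
        have hz : ‖x i - Usol 0 i‖^2 = 0 := le_antisymm (le_trans hle hsum) (sq_nonneg _)
        have hnz : ‖x i - Usol 0 i‖ = 0 := by
          nlinarith [norm_nonneg (x i - Usol 0 i)]
        have := norm_eq_zero.mp hnz
        exact (sub_eq_zero.mp this).symm
      rw [hUeq]
    · have hfU := hfnn (Usol γ)
      have : γ * g (Usol γ) ≤ γ * g x := by linarith
      exact le_of_mul_le_mul_left this hpos
  -- key distance bound
  have hDb : ∀ γ ∈ Set.Ici (0:ℝ), ∀ γ' ∈ Set.Ici (0:ℝ),
      D (Usol γ) (Usol γ') ≤ 4 * g x * |γ - γ'| := by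
    intro γ hγ γ' hγ'
    have h1 := hstrong γ hγ (Usol γ')
    have h2 := hUsol γ' hγ' (Usol γ)
    rw [hF' γ' (Usol γ'), hF' γ' (Usol γ)] at h2
    have h3 : (1/4) * D (Usol γ) (Usol γ')
        ≤ (γ - γ') * (g (Usol γ') - g (Usol γ)) := by nlinarith [h1, h2]
    have ha : (γ - γ') * (g (Usol γ') - g (Usol γ))
        ≤ |γ - γ'| * |g (Usol γ') - g (Usol γ)| := by
      rw [← abs_mul]; exact le_abs_self _
    have hb : |g (Usol γ') - g (Usol γ)| ≤ g x := by
      rw [abs_sub_le_iff]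
      constructor
      · linarith [hgx γ' hγ', hgnn (Usol γ)]
      · linarith [hgx γ hγ, hgnn (Usol γ')]
    have hc : |γ - γ'| * |g (Usol γ') - g (Usol γ)| ≤ |γ - γ'| * g x :=
      mul_le_mul_of_nonneg_left hb (abs_nonneg _)
    linarith
  -- conclude continuity
  rw [Metric.continuousOn_iff]
  intro γ₀ hγ₀ ε hε
  have hgxnn := hgnn x
  have hC : (0:ℝ) < 4 * g x + 1 := by linarith
  refine ⟨ε^2 / (4 * g x + 1), by positivity, ?_⟩
  intro γ hγ hd
  rw [dist_pi_lt_iff hε]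
  intro i
  rw [dist_eq_norm]
  have hDle := hDb γ hγ γ₀ hγ₀
  have hcomp : ‖Usol γ i - Usol γ₀ i‖^2 ≤ D (Usol γ) (Usol γ₀) :=
    Finset.single_le_sum (f := fun j => ‖Usol γ j - Usol γ₀ j‖^2)
      (fun j _ => sq_nonneg _) (Finset.mem_univ i)
  have habs : |γ - γ₀| < ε^2 / (4*g x + 1) := by rwa [Real.dist_eq] at hd
  have ht : (0:ℝ) < ε^2 / (4*g x + 1) := by positivity
  have h5 : 4 * g x * |γ - γ₀| < ε^2 := by
    have h6 : 4 * g x * |γ - γ₀| ≤ 4 * g x * (ε^2/(4*g x + 1)) :=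
      mul_le_mul_of_nonneg_left habs.le (by linarith)
    have h7 : 4 * g x * (ε^2/(4*g x + 1)) < (4 * g x + 1) * (ε^2/(4*g x + 1)) :=
      mul_lt_mul_of_pos_right (by linarith) ht
    have h8 : (4 * g x + 1) * (ε^2/(4*g x + 1)) = ε^2 := by field_simp
    linarith
  have hsq : ‖Usol γ i - Usol γ₀ i‖^2 < ε^2 := by linarith
  exact lt_of_pow_lt_pow_left₀ 2 (le_of_lt hε) hsq
end

section
/- For fixed γ > 0, the unique minimizer of F_γ depends continuously on the weight vector w = (w_{ij}) ∈ [0,∞)^{n(n−1)/2}. -/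
open Finset

set_option maxHeartbeats 2000000

/-- for fixed γ > 0, the unique minimizer of F_γ depends continuously
on the weight vector w ∈ [0,∞)^{n(n−1)/2}. -/
theorem stmt_2 {n p : ℕ} (x : Fin n → EuclideanSpace ℝ (Fin p))
    (N : EuclideanSpace ℝ (Fin p) → ℝ)
    (hN1 : ∀ v, N v = 0 ↔ v = 0)
    (hN2 : ∀ (a : ℝ) v, N (a • v) = |a| * N v)
    (hN3 : ∀ u v, N (u + v) ≤ N u + N v)
    (γ : ℝ) (hγ : 0 < γ)
    (F : (Fin n → Fin n → ℝ) → (Fin n → EuclideanSpace ℝ (Fin p)) → ℝ)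
    (hF : ∀ w U, F w U = (1/2) * ∑ i, ‖x i - U i‖^2 +
      γ * ∑ q ∈ Finset.univ.filter (fun q : Fin n × Fin n => q.1 < q.2),
        w q.1 q.2 * N (U q.1 - U q.2))
    (Usol : (Fin n → Fin n → ℝ) → (Fin n → EuclideanSpace ℝ (Fin p)))
    (hUsol : ∀ w ∈ {w : Fin n → Fin n → ℝ | ∀ i j, 0 ≤ w i j},
      ∀ V, F w (Usol w) ≤ F w V) :
    ContinuousOn Usol {w : Fin n → Fin n → ℝ | ∀ i j, 0 ≤ w i j} := by
  classical
  set P : Finset (Fin n × Fin n) :=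
    Finset.univ.filter (fun q : Fin n × Fin n => q.1 < q.2) with hP
  clear_value P
  -- basic properties of N
  have hN0 : N 0 = 0 := (hN1 0).2 rfl
  have hNneg : ∀ v, N (-v) = N v := by
    intro v; have := hN2 (-1) v; simpa using this
  have hNnonneg : ∀ v, 0 ≤ N v := by
    intro v
    have h := hN3 v (-v)
    rw [add_neg_cancel, hN0, hNneg] at h
    linarith
  have hNsub : ∀ a b, N a - N b ≤ N (a - b) := by
    intro a b
    have h := hN3 b (a - b)
    rw [add_sub_cancel] at h
    linarith
  have hNsub2 : ∀ a b, N (a - b) ≤ N a + N b := by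
    intro a b
    rw [sub_eq_add_neg]
    exact (hN3 a (-b)).trans (by rw [hNneg])
  set C0 : ℝ := ∑ k : Fin p, N (EuclideanSpace.single k 1) with hC0
  clear_value C0
  have hC0nonneg : 0 ≤ C0 := hC0 ▸ Finset.sum_nonneg fun k _ => hNnonneg _
  have hNC : ∀ v : EuclideanSpace ℝ (Fin p), N v ≤ C0 * ‖v‖ := by
    intro v
    have hv : ∑ k : Fin p, v k • EuclideanSpace.single k (1:ℝ) = v := by
      have := (EuclideanSpace.basisFun (Fin p) ℝ).sum_repr v
      simpa [EuclideanSpace.basisFun_apply, EuclideanSpace.basisFun_repr] using this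
    calc N v = N (∑ k : Fin p, v k • EuclideanSpace.single k (1:ℝ)) := by rw [hv]
      _ ≤ ∑ k : Fin p, N (v k • EuclideanSpace.single k (1:ℝ)) :=
          Finset.le_sum_of_subadditive N hN0.le hN3 _ _
      _ ≤ ∑ k : Fin p, ‖v‖ * N (EuclideanSpace.single k (1:ℝ)) := by
          refine Finset.sum_le_sum fun k _ => ?_
          rw [hN2]
          have h1 : |v k| ≤ ‖v‖ := by
            rw [EuclideanSpace.norm_eq]
            refine Real.le_sqrt_of_sq_le ?_
            rw [sq_abs]
            refine Finset.single_le_sum (f := fun i => ‖v i‖^2)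
              (fun i _ => sq_nonneg _) (Finset.mem_univ k) |>.trans_eq' ?_
            simp [Real.norm_eq_abs, sq_abs]
          exact mul_le_mul_of_nonneg_right h1 (hNnonneg _)
      _ = C0 * ‖v‖ := by
          rw [hC0, Finset.sum_mul]; exact Finset.sum_congr rfl fun k _ => mul_comm _ _
  -- strong minimality: quadratic growth away from the minimizer
  have key : ∀ w ∈ {w : Fin n → Fin n → ℝ | ∀ i j, 0 ≤ w i j},
      ∀ V, F w (Usol w) + (1/4) * ∑ i, ‖Usol w i - V i‖^2 ≤ F w V := by
    intro w hw V
    set U := Usol w with hU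
    set M : Fin n → EuclideanSpace ℝ (Fin p) := fun i => (1/2 : ℝ) • (U i + V i) with hM
    have hpar : ∀ i, ‖x i - M i‖^2
        = (1/2)*‖x i - U i‖^2 + (1/2)*‖x i - V i‖^2 - (1/4)*‖U i - V i‖^2 := by
      intro i
      have h := parallelogram_law_with_norm ℝ (x i - U i) (x i - V i)
      have h1 : x i - U i + (x i - V i) = (2:ℝ) • (x i - M i) := by
        simp only [hM]; module
      have h2 : x i - U i - (x i - V i) = -(U i - V i) := by abel
      rw [h1, h2, norm_neg, norm_smul] at h
      simp only [Real.norm_ofNat] at h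
      nlinarith [h]
    have hsumq : ∑ i, ‖x i - M i‖^2
        = (1/2)*∑ i, ‖x i - U i‖^2 + (1/2)*∑ i, ‖x i - V i‖^2
          - (1/4)*∑ i, ‖U i - V i‖^2 := by
      rw [Finset.mul_sum, Finset.mul_sum, Finset.mul_sum, ← Finset.sum_add_distrib,
        ← Finset.sum_sub_distrib]
      exact Finset.sum_congr rfl fun i _ => hpar i
    have hpen : ∑ q ∈ P, w q.1 q.2 * N (M q.1 - M q.2)
        ≤ (1/2) * ∑ q ∈ P, w q.1 q.2 * N (U q.1 - U q.2)
          + (1/2) * ∑ q ∈ P, w q.1 q.2 * N (V q.1 - V q.2) := by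
      rw [Finset.mul_sum, Finset.mul_sum, ← Finset.sum_add_distrib]
      refine Finset.sum_le_sum fun q _ => ?_
      have hm : M q.1 - M q.2
          = (1/2:ℝ) • (U q.1 - U q.2) + (1/2:ℝ) • (V q.1 - V q.2) := by
        simp only [hM]; module
      have ht := hN3 ((1/2:ℝ) • (U q.1 - U q.2)) ((1/2:ℝ) • (V q.1 - V q.2))
      rw [hN2, hN2] at ht
      have habs : |(1/2 : ℝ)| = 1/2 := by norm_num
      rw [habs] at ht
      rw [hm]
      have hwq : 0 ≤ w q.1 q.2 := hw q.1 q.2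
      nlinarith [mul_le_mul_of_nonneg_left ht hwq]
    have hFM' : F w U ≤ F w M := hUsol w hw M
    rw [hF w M, hsumq] at hFM'
    rw [hF w U] at hFM' ⊢
    rw [hF w V]
    have hpen' := mul_le_mul_of_nonneg_left hpen hγ.le
    have h5 : γ * ((1/2) * ∑ q ∈ P, w q.1 q.2 * N (U q.1 - U q.2)
        + (1/2) * ∑ q ∈ P, w q.1 q.2 * N (V q.1 - V q.2))
        = (1/2)*(γ * ∑ q ∈ P, w q.1 q.2 * N (U q.1 - U q.2))
        + (1/2)*(γ * ∑ q ∈ P, w q.1 q.2 * N (V q.1 - V q.2)) := by ring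
    linarith [hpen', h5, hFM']
  -- the key quantitative stability estimate
  have stab : ∀ w ∈ {w : Fin n → Fin n → ℝ | ∀ i j, 0 ≤ w i j},
      ∀ w' ∈ {w : Fin n → Fin n → ℝ | ∀ i j, 0 ≤ w i j}, ∀ i,
      ‖Usol w i - Usol w' i‖
        ≤ 4 * γ * C0 * ∑ q ∈ P, |w q.1 q.2 - w' q.1 q.2| := by
    intro w hw w' hw' i0
    have h1 := key w hw (Usol w')
    have h2 := key w' hw' (Usol w)
    set U := Usol w with hU
    set U' := Usol w' with hU'
    clear_value U U'
    set D2 : ℝ := ∑ i, ‖U i - U' i‖^2 with hD2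
    clear_value D2
    have hD2nonneg : 0 ≤ D2 := hD2 ▸ Finset.sum_nonneg fun i _ => sq_nonneg _
    set s : ℝ := Real.sqrt D2 with hs
    clear_value s
    have hsnonneg : 0 ≤ s := hs ▸ Real.sqrt_nonneg _
    set S : ℝ := ∑ q ∈ P, |w q.1 q.2 - w' q.1 q.2| with hSd
    clear_value S
    have hSnonneg : 0 ≤ S := hSd ▸ Finset.sum_nonneg fun q _ => abs_nonneg _
    have hcoord : ∀ i, ‖U i - U' i‖ ≤ s := by
      intro i
      have h1 : ‖U i - U' i‖^2 ≤ D2 :=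
        hD2 ▸ Finset.single_le_sum (f := fun i => ‖U i - U' i‖^2)
          (fun i _ => sq_nonneg _) (Finset.mem_univ i)
      calc ‖U i - U' i‖ = Real.sqrt (‖U i - U' i‖^2) := by
            rw [Real.sqrt_sq (norm_nonneg _)]
        _ ≤ s := by rw [hs]; exact Real.sqrt_le_sqrt h1
    -- the two strong-minimality inequalities
    have hsym : ∑ i, ‖U' i - U i‖^2 = D2 := by
      rw [hD2]; exact Finset.sum_congr rfl fun i _ => by rw [norm_sub_rev]
    rw [hsym] at h2
    rw [hF w U, hF w U'] at h1
    rw [hF w' U, hF w' U'] at h2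
    -- combine into one sum estimate
    set T : ℝ := ∑ q ∈ P,
      (w q.1 q.2 - w' q.1 q.2) * (N (U' q.1 - U' q.2) - N (U q.1 - U q.2)) with hT
    clear_value T
    have hTexp : T = (∑ q ∈ P, w q.1 q.2 * N (U' q.1 - U' q.2))
        + (∑ q ∈ P, w' q.1 q.2 * N (U q.1 - U q.2))
        - (∑ q ∈ P, w q.1 q.2 * N (U q.1 - U q.2))
        - (∑ q ∈ P, w' q.1 q.2 * N (U' q.1 - U' q.2)) := by
      rw [hT]
      simp only [sub_mul, mul_sub, Finset.sum_sub_distrib]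
      ring
    have hmain : (1/2) * D2 ≤ γ * T := by
      have h3 : γ * T = γ * (∑ q ∈ P, w q.1 q.2 * N (U' q.1 - U' q.2))
          + γ * (∑ q ∈ P, w' q.1 q.2 * N (U q.1 - U q.2))
          - γ * (∑ q ∈ P, w q.1 q.2 * N (U q.1 - U q.2))
          - γ * (∑ q ∈ P, w' q.1 q.2 * N (U' q.1 - U' q.2)) := by
        rw [hTexp]; ring
      linarith [h1, h2, h3.le, h3.ge]
    -- bound T
    have hTbound : T ≤ S * (2 * C0 * s) := by
      rw [hT, hSd, Finset.sum_mul]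
      refine Finset.sum_le_sum fun q _ => ?_
      have habs : |N (U' q.1 - U' q.2) - N (U q.1 - U q.2)| ≤ 2 * C0 * s := by
        have hd : (U' q.1 - U' q.2) - (U q.1 - U q.2)
            = (U' q.1 - U q.1) - (U' q.2 - U q.2) := by abel
        have hd' : (U q.1 - U q.2) - (U' q.1 - U' q.2)
            = -((U' q.1 - U q.1) - (U' q.2 - U q.2)) := by abel
        have hb : N ((U' q.1 - U q.1) - (U' q.2 - U q.2)) ≤ 2 * C0 * s := by
          refine (hNsub2 _ _).trans ?_
          have e1 : N (U' q.1 - U q.1) ≤ C0 * s := by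
            refine (hNC _).trans ?_
            rw [norm_sub_rev]
            exact mul_le_mul_of_nonneg_left (hcoord q.1) hC0nonneg
          have e2 : N (U' q.2 - U q.2) ≤ C0 * s := by
            refine (hNC _).trans ?_
            rw [norm_sub_rev]
            exact mul_le_mul_of_nonneg_left (hcoord q.2) hC0nonneg
          linarith
        rw [abs_sub_le_iff]
        constructor
        · refine (hNsub _ _).trans ?_
          rw [hd]; exact hb
        · refine (hNsub _ _).trans ?_
          rw [hd', hNneg]; exact hb
      calc (w q.1 q.2 - w' q.1 q.2) * (N (U' q.1 - U' q.2) - N (U q.1 - U q.2))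
          ≤ |(w q.1 q.2 - w' q.1 q.2) * (N (U' q.1 - U' q.2) - N (U q.1 - U q.2))| :=
            le_abs_self _
        _ = |w q.1 q.2 - w' q.1 q.2| * |N (U' q.1 - U' q.2) - N (U q.1 - U q.2)| :=
            abs_mul _ _
        _ ≤ |w q.1 q.2 - w' q.1 q.2| * (2 * C0 * s) :=
            mul_le_mul_of_nonneg_left habs (abs_nonneg _)
    -- conclude s ≤ 4 γ C0 S
    have hD2s : D2 = s * s := by rw [hs]; exact (Real.mul_self_sqrt hD2nonneg).symm
    have hfinal : s ≤ 4 * γ * C0 * S := by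
      rcases eq_or_lt_of_le hsnonneg with h0 | hspos
      · rw [← h0]
        positivity
      · have h4 : (1/2) * (s * s) ≤ γ * (S * (2 * C0 * s)) := by
          rw [← hD2s]
          exact hmain.trans (mul_le_mul_of_nonneg_left hTbound hγ.le)
        nlinarith [h4, hspos]
    exact (hcoord i0).trans hfinal
  -- conclude Lipschitz continuity, hence continuity
  have hlip : LipschitzOnWith (Real.toNNReal (4 * γ * C0 * (n * n)))
      Usol {w : Fin n → Fin n → ℝ | ∀ i j, 0 ≤ w i j} := by
    rw [lipschitzOnWith_iff_dist_le_mul]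
    intro w hw w' hw'
    have hKd : (0 : ℝ) ≤ (Real.toNNReal (4 * γ * C0 * (n * n)) : ℝ) * dist w w' :=
      mul_nonneg (NNReal.coe_nonneg _) dist_nonneg
    rw [dist_pi_le_iff hKd]
    intro i
    have hstab := stab w hw w' hw' i
    have hSbound : ∑ q ∈ P, |w q.1 q.2 - w' q.1 q.2| ≤ (n * n : ℝ) * dist w w' := by
      have hcard : (P.card : ℝ) ≤ (n * n : ℝ) := by
        have : P.card ≤ (Finset.univ : Finset (Fin n × Fin n)).card := by
          rw [hP]; exact Finset.card_filter_le _ _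
        rw [Finset.card_univ, Fintype.card_prod, Fintype.card_fin] at this
        exact_mod_cast this
      calc ∑ q ∈ P, |w q.1 q.2 - w' q.1 q.2| ≤ ∑ _q ∈ P, dist w w' := by
            refine Finset.sum_le_sum fun q _ => ?_
            calc |w q.1 q.2 - w' q.1 q.2| = dist (w q.1 q.2) (w' q.1 q.2) :=
                  (Real.dist_eq _ _).symm
              _ ≤ dist (w q.1) (w' q.1) := dist_le_pi_dist _ _ _
              _ ≤ dist w w' := dist_le_pi_dist _ _ _
        _ = (P.card : ℝ) * dist w w' := by rw [Finset.sum_const, nsmul_eq_mul]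
        _ ≤ (n * n : ℝ) * dist w w' := mul_le_mul_of_nonneg_right hcard dist_nonneg
    have hmult : 4 * γ * C0 * ∑ q ∈ P, |w q.1 q.2 - w' q.1 q.2|
        ≤ 4 * γ * C0 * ((n * n : ℝ) * dist w w') :=
      mul_le_mul_of_nonneg_left hSbound (by positivity)
    rw [dist_eq_norm]
    refine hstab.trans (hmult.trans ?_)
    have hcoe : (4 * γ * C0 * (n * n) : ℝ)
        ≤ (Real.toNNReal (4 * γ * C0 * (n * n)) : ℝ) := by
      rw [Real.coe_toNNReal']
      exact le_max_left _ _
    calc 4 * γ * C0 * ((n * n : ℝ) * dist w w')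
        = (4 * γ * C0 * (n * n)) * dist w w' := by ring
      _ ≤ (Real.toNNReal (4 * γ * C0 * (n * n)) : ℝ) * dist w w' :=
          mul_le_mul_of_nonneg_right hcoe dist_nonneg
  exact hlip.continuousOn
end

section
/- The largest eigenvalue of the Laplacian L of a simple graph on n nodes satisfies ρ(L) ≤ max{ d(i) + d(j) : (i,j) ∈ E }, where d(i) is the degree of node i; in particular ρ(L) ≤ n, with equality when the graph is complete. -/
open Finset Matrix

/-- every eigenvalue μ of the Laplacian L of a simple graph satisfies
μ ≤ max{d(i)+d(j) : (i,j) ∈ E}; in particular μ ≤ n, with equality attained (n is an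
eigenvalue) when the graph is complete (on at least two nodes). -/
theorem stmt_16 {n : ℕ} (G : SimpleGraph (Fin n)) [DecidableRel G.Adj]
    (μ : ℝ) (v : Fin n → ℝ) (hv : v ≠ 0)
    (heig : (G.lapMatrix ℝ) *ᵥ v = μ • v) :
    μ ≤ (Finset.univ.sup (fun q : Fin n × Fin n =>
        if G.Adj q.1 q.2 then G.degree q.1 + G.degree q.2 else 0) : ℕ) ∧
    μ ≤ n ∧
    (2 ≤ n → G = ⊤ → ∃ u : Fin n → ℝ, u ≠ 0 ∧ (G.lapMatrix ℝ) *ᵥ u = (n : ℝ) • u) := by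
  have hn : 0 < n := by
    rcases Nat.eq_zero_or_pos n with h | h
    · exact absurd (funext fun i => absurd i.2 (by omega)) hv
    · exact h
  -- row equations
  have hrow : ∀ i : Fin n, μ * v i =
      (G.degree i : ℝ) * v i - ∑ j ∈ G.neighborFinset i, v j := by
    intro i
    have h := congrFun heig i
    rw [SimpleGraph.lapMatrix_mulVec_apply] at h
    simpa using h.symm
  -- index of maximal |v|
  obtain ⟨i, -, hi⟩ := Finset.exists_max_image (Finset.univ : Finset (Fin n))
    (fun k => |v k|) ⟨⟨0, hn⟩, Finset.mem_univ _⟩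
  have hi' : ∀ k : Fin n, |v k| ≤ |v i| := fun k => hi k (Finset.mem_univ k)
  have hvi : 0 < |v i| := by
    by_contra h
    push_neg at h
    exact hv (funext fun k => abs_nonpos_iff.mp ((hi' k).trans h))
  constructor
  · -- Part 1 : μ ≤ max over edges of d(i)+d(j)
    set f : Fin n × Fin n → ℕ := fun q =>
      if G.Adj q.1 q.2 then G.degree q.1 + G.degree q.2 else 0 with hf
    have hMle : ∀ a b : Fin n, G.Adj a b →
        (G.degree a + G.degree b : ℝ) ≤ ((Finset.univ.sup f : ℕ) : ℝ) := by
      intro a b hab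
      have h := Finset.le_sup (f := f) (Finset.mem_univ (a, b))
      rw [hf] at h
      simp only [hab, if_true] at h
      exact_mod_cast h
    by_cases hnb : (G.neighborFinset i).Nonempty
    · obtain ⟨j, hji, hj⟩ := Finset.exists_max_image (G.neighborFinset i)
        (fun k => |v k|) hnb
      have hadj : G.Adj i j := (SimpleGraph.mem_neighborFinset _ _ _).mp hji
      set di : ℝ := (G.degree i : ℝ) with hdi
      set dj : ℝ := (G.degree j : ℝ) with hdj
      have hdi0 : 0 ≤ di := Nat.cast_nonneg _
      have hdj0 : 0 ≤ dj := Nat.cast_nonneg _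
      have hA : |μ - di| * |v i| ≤ di * |v j| := by
        have h1 : (μ - di) * v i = -(∑ k ∈ G.neighborFinset i, v k) := by
          rw [sub_mul]; linarith [hrow i]
        calc |μ - di| * |v i| = |(μ - di) * v i| := (abs_mul _ _).symm
          _ = |∑ k ∈ G.neighborFinset i, v k| := by rw [h1, abs_neg]
          _ ≤ ∑ k ∈ G.neighborFinset i, |v k| := Finset.abs_sum_le_sum_abs _ _
          _ ≤ (G.neighborFinset i).card • |v j| :=
            Finset.sum_le_card_nsmul _ _ _ (fun k hk => hj k hk)
          _ = di * |v j| := by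
            rw [SimpleGraph.card_neighborFinset_eq_degree, nsmul_eq_mul]
      have hB : |μ - dj| * |v j| ≤ dj * |v i| := by
        have h1 : (μ - dj) * v j = -(∑ k ∈ G.neighborFinset j, v k) := by
          rw [sub_mul]; linarith [hrow j]
        calc |μ - dj| * |v j| = |(μ - dj) * v j| := (abs_mul _ _).symm
          _ = |∑ k ∈ G.neighborFinset j, v k| := by rw [h1, abs_neg]
          _ ≤ ∑ k ∈ G.neighborFinset j, |v k| := Finset.abs_sum_le_sum_abs _ _
          _ ≤ (G.neighborFinset j).card • |v i| :=
            Finset.sum_le_card_nsmul _ _ _ (fun k _ => hi' k)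
          _ = dj * |v i| := by
            rw [SimpleGraph.card_neighborFinset_eq_degree, nsmul_eq_mul]
      by_contra hgt
      push_neg at hgt
      have hc : di + dj < μ := lt_of_le_of_lt (hMle i j hadj) hgt
      have hmi : di < μ := by linarith
      have hmj : dj < μ := by linarith
      have hA' : (μ - di) * |v i| ≤ di * |v j| := by
        rwa [abs_of_pos (by linarith)] at hA
      have hB' : (μ - dj) * |v j| ≤ dj * |v i| := by
        rwa [abs_of_pos (by linarith)] at hB
      have hvj : 0 < |v j| := by
        by_contra h
        push_neg at h
        have hj0 : |v j| = 0 := le_antisymm h (abs_nonneg _)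
        rw [hj0, mul_zero] at hA'
        nlinarith
      have hmul := mul_le_mul hA' hB'
        (mul_nonneg (by linarith) (abs_nonneg _)) (by positivity)
      nlinarith [mul_pos hvi hvj]
    · -- isolated vertex : μ = 0
      have hNe : G.neighborFinset i = ∅ := Finset.not_nonempty_iff_eq_empty.mp hnb
      have hd : G.degree i = 0 := by
        rw [← SimpleGraph.card_neighborFinset_eq_degree, hNe]; rfl
      have h := hrow i
      rw [hNe, hd] at h
      simp only [Finset.sum_empty, Nat.cast_zero, zero_mul, sub_zero] at h
      have hμ : μ = 0 := by
        have := mul_eq_zero.mp h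
        rcases this with h' | h'
        · exact h'
        · exact absurd (abs_eq_zero.mpr h') (ne_of_gt hvi)
      rw [hμ]
      exact Nat.cast_nonneg _
  constructor
  · -- Part 2 : μ ≤ n
    set S : ℝ := ∑ k, v k ^ 2 with hS
    set T : ℝ := ∑ k, v k with hT
    have hSpos : 0 < S := by
      have hx : ∃ k : Fin n, v k ≠ 0 := by
        by_contra h
        push_neg at h
        exact hv (funext h)
      obtain ⟨k, hk⟩ := hx
      exact Finset.sum_pos' (fun l _ => sq_nonneg _)
        ⟨k, Finset.mem_univ k, by positivity⟩
    have hquad : μ * S =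
        (∑ a : Fin n, ∑ b : Fin n, if G.Adj a b then (v a - v b) ^ 2 else 0) / 2 := by
      have h := G.lapMatrix_toLinearMap₂' (R := ℝ) v
      rw [Matrix.toLinearMap₂'_apply', heig] at h
      rw [← h]
      simp only [dotProduct, Pi.smul_apply, smul_eq_mul, hS, Finset.mul_sum]
      exact Finset.sum_congr rfl fun x _ => by ring
    have hident : ∑ a : Fin n, ∑ b : Fin n, (v a - v b) ^ 2
        = n * S + n * S - 2 * (T * T) := by
      have e1 : ∀ a : Fin n, ∑ b : Fin n, (v a - v b) ^ 2
          = n * v a ^ 2 + S - 2 * (v a * T) := by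
        intro a
        calc ∑ b : Fin n, (v a - v b) ^ 2
            = ∑ b : Fin n, (v a ^ 2 + v b ^ 2 - 2 * (v a * v b)) :=
              Finset.sum_congr rfl fun b _ => by ring
          _ = (∑ _b : Fin n, v a ^ 2) + (∑ b : Fin n, v b ^ 2)
              - ∑ b : Fin n, 2 * (v a * v b) := by
              rw [Finset.sum_sub_distrib, Finset.sum_add_distrib]
          _ = n * v a ^ 2 + S - 2 * (v a * T) := by
              rw [Finset.sum_const, Finset.card_univ, Fintype.card_fin, nsmul_eq_mul,
                ← Finset.mul_sum, ← Finset.mul_sum, ← hS, ← hT]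
      have e2 : ∑ a : Fin n, 2 * (v a * T) = 2 * (T * T) := by
        rw [← Finset.mul_sum, ← Finset.sum_mul, ← hT]
      calc ∑ a : Fin n, ∑ b : Fin n, (v a - v b) ^ 2
          = ∑ a : Fin n, (n * v a ^ 2 + S - 2 * (v a * T)) :=
            Finset.sum_congr rfl fun a _ => e1 a
        _ = ((∑ a : Fin n, (n:ℝ) * v a ^ 2) + ∑ _a : Fin n, S)
            - ∑ a : Fin n, 2 * (v a * T) := by
            rw [Finset.sum_sub_distrib, Finset.sum_add_distrib]
        _ = n * S + n * S - 2 * (T * T) := by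
            rw [← Finset.mul_sum, Finset.sum_const, Finset.card_univ, Fintype.card_fin,
              nsmul_eq_mul, e2, ← hS]
    have hbound : (∑ a : Fin n, ∑ b : Fin n, if G.Adj a b then (v a - v b) ^ 2 else 0)
        ≤ ∑ a : Fin n, ∑ b : Fin n, (v a - v b) ^ 2 := by
      refine Finset.sum_le_sum fun a _ => Finset.sum_le_sum fun b _ => ?_
      split
      · exact le_refl _
      · exact sq_nonneg _
    have hμS : μ * S ≤ n * S := by
      rw [hquad]
      rw [hident] at hbound
      nlinarith [mul_self_nonneg T]
    exact le_of_mul_le_mul_right hμS hSpos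
  · -- Part 3 : complete graph has eigenvalue n
    intro hn2 hGtop
    subst hGtop
    set i0 : Fin n := ⟨0, by omega⟩ with hi0
    set i1 : Fin n := ⟨1, by omega⟩ with hi1
    have hne : i0 ≠ i1 := by
      simp [hi0, hi1, Fin.ext_iff]
    refine ⟨fun k => if k = i0 then (1 : ℝ) else if k = i1 then -1 else 0, ?_, ?_⟩
    · intro h
      have := congrFun h i0
      simp at this
    · funext a
      rw [SimpleGraph.lapMatrix_mulVec_apply]
      have hNB : (⊤ : SimpleGraph (Fin n)).neighborFinset a = Finset.univ.erase a := by
        ext b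
        simp [SimpleGraph.mem_neighborFinset, ne_comm, eq_comm]
      have hdeg : ((⊤ : SimpleGraph (Fin n)).degree a : ℝ) = (n : ℝ) - 1 := by
        rw [← SimpleGraph.card_neighborFinset_eq_degree, hNB,
          Finset.card_erase_of_mem (Finset.mem_univ a), Finset.card_univ, Fintype.card_fin]
        rw [Nat.cast_sub hn]
        simp
      have hsum : ∑ k : Fin n, (if k = i0 then (1 : ℝ) else if k = i1 then -1 else 0) = 0 := by
        have hsplit : ∀ k : Fin n, (if k = i0 then (1 : ℝ) else if k = i1 then -1 else 0)
            = (if k = i0 then (1 : ℝ) else 0) + (if k = i1 then -1 else 0) := by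
          intro k
          by_cases h0 : k = i0
          · subst h0
            simp [hne]
          · simp [h0]
        simp_rw [hsplit]
        rw [Finset.sum_add_distrib, Finset.sum_ite_eq' Finset.univ i0,
          Finset.sum_ite_eq' Finset.univ i1]
        simp
      rw [hNB, Finset.sum_erase_eq_sub (Finset.mem_univ a), hsum, hdeg]
      simp only [Pi.smul_apply, smul_eq_mul]
      ring
end
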